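/- The k-th super-Catalan number s_k equals (1/(2k))·Σ_{j=1}^{k-1} binom(k,j)·binom(k-2, j-1)·2^j for all k ≥ 2. -/

import Mathlib

open Finset PowerSeries

namespace Stmt6Aux


lemma tuple_succ (g : ℕ → ℚ) (n k : ℕ) :
    ∑ f ∈ Finset.Nat.antidiagonalTuple (n+1) k, ∏ i, g (f i)
      = ∑ p ∈ Finset.HasAntidiagonal.antidiagonal k,
          g p.1 * ∑ f ∈ Finset.Nat.antidiagonalTuple n p.2, ∏ i, g (f i) := by
  simp_rw [Finset.mul_sum]
  rw [Finset.sum_sigma' (Finset.HasAntidiagonal.antidiagonal k)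
      (fun p => Finset.Nat.antidiagonalTuple n p.2)
      (fun p f => g p.1 * ∏ i, g (f i))]
  refine (Finset.sum_nbij' (fun x => Fin.cons x.1.1 x.2)
      (fun f => ⟨(f 0, ∑ i : Fin n, f i.succ), Fin.tail f⟩) ?_ ?_ ?_ ?_ ?_).symm
  · rintro ⟨⟨a, b⟩, f⟩ hx
    simp only [Finset.mem_sigma, Finset.HasAntidiagonal.mem_antidiagonal,
      Finset.Nat.mem_antidiagonalTuple] at hx ⊢
    rw [Fin.sum_cons]
    omega
  · intro f hf
    simp only [Finset.Nat.mem_antidiagonalTuple] at hf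
    simp only [Finset.mem_sigma, Finset.HasAntidiagonal.mem_antidiagonal,
      Finset.Nat.mem_antidiagonalTuple]
    constructor
    · rw [← hf, Fin.sum_univ_succ]
    · rfl
  · rintro ⟨⟨a, b⟩, f⟩ hx
    simp only [Finset.mem_sigma, Finset.HasAntidiagonal.mem_antidiagonal,
      Finset.Nat.mem_antidiagonalTuple] at hx
    simp only [Fin.cons_zero, Fin.cons_succ, Fin.tail_cons]
    have : ∑ i, f i = b := hx.2
    simp [this]
  · intro f hf
    simp only
    exact Fin.cons_self_tail f
  · rintro ⟨⟨a, b⟩, f⟩ hx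
    simp [Fin.prod_univ_succ]

lemma coeff_mk_pow (g : ℕ → ℚ) : ∀ n k, (coeff k) ((PowerSeries.mk g) ^ n)
    = ∑ f ∈ Finset.Nat.antidiagonalTuple n k, ∏ i, g (f i) := by
  intro n
  induction n with
  | zero =>
    intro k
    cases k with
    | zero => simp [Finset.Nat.antidiagonalTuple_zero_zero]
    | succ k => simp [Finset.Nat.antidiagonalTuple_zero_succ]
  | succ n ih =>
    intro k
    rw [pow_succ', coeff_mul, tuple_succ]
    refine Finset.sum_congr rfl ?_
    intro p hp
    rw [coeff_mk, ih]

lemma coeff_mk_pow_eq_zero {g : ℕ → ℚ} (hg : g 0 = 0) {n k : ℕ} (h : k < n) :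
    (coeff k) ((PowerSeries.mk g) ^ n) = 0 := by
  have hX : (X : ℚ⟦X⟧) ∣ PowerSeries.mk g := X_dvd_iff.mpr (by simp [hg])
  have := pow_dvd_pow_of_dvd hX n
  exact (X_pow_dvd_iff.mp this) k h



/-- summand of the closed-form sum -/
def sT (n i : ℕ) : ℚ := ((n+2).choose (i+1) : ℚ) * (n.choose i : ℚ) * 2^(i+1)

/-- the closed-form sum (numerator) -/
def sA (m : ℕ) : ℚ := ∑ i ∈ range (m+1), sT m i

/-- telescoping certificate -/
def sG (m j : ℕ) : ℚ :=
  (2*(j:ℚ)^4 - ((2*(m:ℚ)+4)*(2*(m:ℚ)+5)+2)*(j:ℚ)^2 - (2*(m:ℚ)+4)*(2*(m:ℚ)+5)*(j:ℚ))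
    * 2^j * ((m+4).choose (j+1) : ℚ) * ((m+2).choose j : ℚ)

lemma cert (m i : ℕ) (hi : i < m + 3) :
    ((m:ℚ)+2)*((m:ℚ)+4)*( ((m:ℚ)+2)*((m:ℚ)+3)*sT (m+2) i + ((m:ℚ)+1)*((m:ℚ)+3)*sT m i
      - 3*(2*(m:ℚ)+5)*((m:ℚ)+2)*sT (m+1) i ) = sG m (i+1) - sG m i := by
  rcases le_or_gt i m with him | hmi
  · -- main case : i ≤ m
    obtain ⟨d, rfl⟩ : ∃ d, m = i + d := ⟨m - i, by omega⟩
    simp only [sT, sG]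
    simp only [show i+d+2+2 = i+d+4 from by omega, show i+d+1+2 = i+d+3 from by omega,
      show i+1+1 = i+2 from by omega]
    have e1 := Nat.cast_choose (K := ℚ) (show i+1 ≤ i+d+4 from by omega)
    rw [show i+d+4 - (i+1) = d+3 from by omega] at e1
    have e2 := Nat.cast_choose (K := ℚ) (show i+2 ≤ i+d+4 from by omega)
    rw [show i+d+4 - (i+2) = d+2 from by omega] at e2
    have e3 := Nat.cast_choose (K := ℚ) (show i ≤ i+d+2 from by omega)
    rw [show i+d+2 - i = d+2 from by omega] at e3
    have e4 := Nat.cast_choose (K := ℚ) (show i+1 ≤ i+d+2 from by omega)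
    rw [show i+d+2 - (i+1) = d+1 from by omega] at e4
    have e5 := Nat.cast_choose (K := ℚ) (show i+1 ≤ i+d+3 from by omega)
    rw [show i+d+3 - (i+1) = d+2 from by omega] at e5
    have e6 := Nat.cast_choose (K := ℚ) (show i ≤ i+d+1 from by omega)
    rw [show i+d+1 - i = d+1 from by omega] at e6
    have e7 := Nat.cast_choose (K := ℚ) (show i ≤ i+d from by omega)
    rw [show i+d - i = d from by omega] at e7
    rw [e1, e2, e3, e4, e5, e6, e7]
    simp only [show i+d+4 = i+d+3+1 from by omega, show i+d+3 = i+d+2+1 from by omega,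
      show i+d+2 = i+d+1+1 from by omega, show i+d+1 = i+d+1 from rfl,
      show (i+d+1 : ℕ) = (i+d)+1 from by omega,
      show (d+3 : ℕ) = d+2+1 from by omega, show (d+2:ℕ) = d+1+1 from by omega,
      show (i+2:ℕ) = i+1+1 from by omega,
      Nat.factorial_succ]
    have hp : ((Nat.factorial i : ℕ) : ℚ) ≠ 0 := by
      exact_mod_cast Nat.cast_ne_zero.mpr (Nat.factorial_ne_zero i)
    have hq : ((Nat.factorial d : ℕ) : ℚ) ≠ 0 := by
      exact_mod_cast Nat.cast_ne_zero.mpr (Nat.factorial_ne_zero d)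
    push_cast
    have h1 : (i:ℚ)+1 ≠ 0 := by positivity
    have h2 : (i:ℚ)+1+1 ≠ 0 := by positivity
    have h3 : (d:ℚ)+1 ≠ 0 := by positivity
    have h4 : (d:ℚ)+1+1 ≠ 0 := by positivity
    have h5 : (d:ℚ)+1+1+1 ≠ 0 := by positivity
    field_simp
    ring
  · -- boundary cases
    have : i = m+1 ∨ i = m+2 := by omega
    rcases this with rfl | rfl
    · -- i = m+1
      have c1 : ((m+4).choose (m+2) : ℚ) = ((m:ℚ)+4)*((m:ℚ)+3)/2 := by
        have h := Nat.choose_symm (show m+2 ≤ m+4 from by omega)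
        rw [show m+4-(m+2) = 2 from by omega] at h
        rw [← h, Nat.cast_choose_two]
        push_cast
        all_goals ring
      have c2 : (m+2).choose (m+1) = m+2 := by
        have h := Nat.choose_symm (show m+1 ≤ m+2 from by omega)
        rw [show m+2-(m+1) = 1 from by omega] at h
        simpa [Nat.choose_one_right] using h.symm
      have c3 : (m+3).choose (m+2) = m+3 := by
        have h := Nat.choose_symm (show m+2 ≤ m+3 from by omega)
        rw [show m+3-(m+2) = 1 from by omega] at h
        simpa [Nat.choose_one_right] using h.symm
      have c4 : (m+4).choose (m+3) = m+4 := by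
        have h := Nat.choose_symm (show m+3 ≤ m+4 from by omega)
        rw [show m+4-(m+3) = 1 from by omega] at h
        simpa [Nat.choose_one_right] using h.symm
      simp only [sT, sG]
      simp only [show m+2+2 = m+4 from by omega, show m+1+2 = m+3 from by omega,
        show m+1+1 = m+2 from by omega, show m+1+1+1 = m+3 from by omega,
        show m+2+1 = m+3 from by omega]
      rw [c1]
      simp [c2, c3, c4, Nat.choose_self, Nat.choose_succ_self]
      push_cast
      ring
    · -- i = m+2
      simp only [sT, sG]
      simp only [show m+2+2 = m+4 from by omega, show m+2+1 = m+3 from by omega,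
        show m+1+2 = m+3 from by omega, show m+2+1+1 = m+4 from by omega,
        show m+3+1 = m+4 from by omega]
      have c4 : (m+4).choose (m+3) = m+4 := by
        have h := Nat.choose_symm (show m+3 ≤ m+4 from by omega)
        rw [show m+4-(m+3) = 1 from by omega] at h
        simpa [Nat.choose_one_right] using h.symm
      have z1 : (m+1).choose (m+2) = 0 := Nat.choose_succ_self (m+1)
      have z2 : (m+2).choose (m+3) = 0 := Nat.choose_succ_self (m+2)
      have z3 : m.choose (m+2) = 0 := Nat.choose_eq_zero_of_lt (by omega)
      simp [c4, z1, z2, z3, Nat.choose_self]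
      push_cast
      ring

lemma sT_eq_zero {n i : ℕ} (h : n < i) : sT n i = 0 := by
  simp [sT, Nat.choose_eq_zero_of_lt h]

lemma keyA (m : ℕ) :
    ((m:ℚ)+2)*((m:ℚ)+3)*sA (m+2) + ((m:ℚ)+1)*((m:ℚ)+3)*sA m
      = 3*(2*(m:ℚ)+5)*((m:ℚ)+2)*sA (m+1) := by
  have hA2 : sA (m+2) = ∑ i ∈ range (m+3), sT (m+2) i := by
    rw [sA]
  have hA1 : sA (m+1) = ∑ i ∈ range (m+3), sT (m+1) i := by
    rw [sA]
    apply Finset.sum_subset (Finset.range_subset_range.mpr (by omega))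
    intro x hx hnx
    simp only [mem_range] at hx hnx
    exact sT_eq_zero (by omega)
  have hA0 : sA m = ∑ i ∈ range (m+3), sT m i := by
    rw [sA]
    apply Finset.sum_subset (Finset.range_subset_range.mpr (by omega))
    intro x hx hnx
    simp only [mem_range] at hx hnx
    exact sT_eq_zero (by omega)
  have tele : ∑ i ∈ range (m+3), (sG m (i+1) - sG m i) = sG m (m+3) - sG m 0 :=
    Finset.sum_range_sub (sG m) (m+3)
  have hGend : sG m (m+3) = 0 := by
    simp [sG, Nat.choose_succ_self]
  have hG0 : sG m 0 = 0 := by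
    norm_num [sG]
  have hsum : ∑ i ∈ range (m+3), (((m:ℚ)+2)*((m:ℚ)+4)*( ((m:ℚ)+2)*((m:ℚ)+3)*sT (m+2) i
      + ((m:ℚ)+1)*((m:ℚ)+3)*sT m i - 3*(2*(m:ℚ)+5)*((m:ℚ)+2)*sT (m+1) i )) = 0 := by
    rw [Finset.sum_congr rfl (fun i hi => cert m i (mem_range.mp hi)), tele, hGend, hG0]
    ring
  have expand : ∑ i ∈ range (m+3), (((m:ℚ)+2)*((m:ℚ)+4)*( ((m:ℚ)+2)*((m:ℚ)+3)*sT (m+2) i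
      + ((m:ℚ)+1)*((m:ℚ)+3)*sT m i - 3*(2*(m:ℚ)+5)*((m:ℚ)+2)*sT (m+1) i ))
      = ((m:ℚ)+2)*((m:ℚ)+4)*( ((m:ℚ)+2)*((m:ℚ)+3)*(∑ i ∈ range (m+3), sT (m+2) i)
      + ((m:ℚ)+1)*((m:ℚ)+3)*(∑ i ∈ range (m+3), sT m i)
      - 3*(2*(m:ℚ)+5)*((m:ℚ)+2)*(∑ i ∈ range (m+3), sT (m+1) i)) := by
    simp only [Finset.mul_sum, mul_add, mul_sub, ← Finset.sum_add_distrib,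
      ← Finset.sum_sub_distrib]
    all_goals exact Finset.sum_congr rfl fun i _ => by ring
  rw [expand] at hsum
  have hne : ((m:ℚ)+2)*((m:ℚ)+4) ≠ 0 := by positivity
  have h0 := (mul_eq_zero.mp hsum).resolve_left hne
  rw [hA2, hA1, hA0]
  linarith


end Stmt6Aux

open Stmt6Aux


open Stmt6Aux

theorem stmt_6 (s : ℕ → ℕ) (hs0 : s 0 = 0) (hs1 : s 1 = 1)
    (hrec : ∀ k, 2 ≤ k → s k = ∑ n ∈ Finset.Icc 2 k,
      ∑ f ∈ Finset.Nat.antidiagonalTuple n k, ∏ i, s (f i)) :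
    ∀ k, 2 ≤ k → (s k : ℚ) = (1 / (2 * k : ℚ)) *
      ∑ j ∈ Finset.Icc 1 (k - 1),
        (Nat.choose k j : ℚ) * (Nat.choose (k - 2) (j - 1) : ℚ) * 2 ^ j := by
  classical
  set S : PowerSeries ℚ := PowerSeries.mk (fun n => (s n : ℚ)) with hSdef
  have hco : ∀ k, (coeff k) S = (s k : ℚ) := fun k => coeff_mk k _
  have hvan : ∀ {n k : ℕ}, k < n → (coeff k) (S ^ n) = 0 := fun {n k} h =>
    coeff_mk_pow_eq_zero (by simp [hs0]) h
  have hQ : ∀ k, 2 ≤ k → (s k : ℚ) = ∑ n ∈ Icc 2 k, (coeff k) (S ^ n) := by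
    intro k hk
    have h := congrArg (fun x : ℕ => (x : ℚ)) (hrec k hk)
    push_cast at h
    rw [h]
    refine Finset.sum_congr rfl fun n _ => ?_
    rw [hSdef, coeff_mk_pow]
  -- the quadratic functional equation
  have hkey0 : S - X = S*S + S * (S - X) := by
    have hu0 : (coeff 0) (S - X) = 0 := by
      rw [map_sub, hco, hs0]
      simp
    have hu1 : (coeff 1) (S - X) = 0 := by
      rw [map_sub, hco, hs1]
      simp
    have huk : ∀ j, 2 ≤ j → (coeff j) (S - X) = (s j : ℚ) := by
      intro j hj
      rw [map_sub, hco, coeff_X, if_neg (by omega)]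
      ring
    ext k
    rw [map_add, coeff_mul k S (S - X)]
    simp only [hco]
    match k with
    | 0 =>
      have h00 : (coeff 0) (S*S) = 0 := by
        rw [← pow_two]
        exact hvan (by omega)
      rw [hu0, h00, Finset.Nat.sum_antidiagonal_eq_sum_range_succ_mk]
      simp only [Finset.sum_range_succ, Finset.sum_range_zero]
      rw [hs0]
      push_cast
      ring
    | 1 =>
      have h01 : (coeff 1) (S*S) = 0 := by
        rw [← pow_two]
        exact hvan (by omega)
      rw [hu1, h01, Finset.Nat.sum_antidiagonal_eq_sum_range_succ_mk]
      simp only [Finset.sum_range_succ, Finset.sum_range_zero]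
      rw [hs0, hs1]
      rw [show (1:ℕ) - 0 = 1 from rfl, show (1:ℕ) - 1 = 0 from rfl, hu0, hu1]
      push_cast
      ring
    | (m+2) =>
      rw [huk (m+2) (by omega), hQ (m+2) (by omega)]
      have hmem : (2:ℕ) ∈ Icc 2 (m+2) := by simp
      rw [← Finset.add_sum_erase _ _ hmem, Finset.Icc_erase_left]
      have hS2 : (coeff (m+2)) (S ^ 2) = (coeff (m+2)) (S*S) := by rw [pow_two]
      rw [hS2]
      have hrest : ∑ n ∈ Ioc 2 (m+2), (coeff (m+2)) (S ^ n)
          = ∑ p ∈ Finset.HasAntidiagonal.antidiagonal (m+2), (s p.1 : ℚ) * (coeff p.2) (S - X) := by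
        have hIoc : Ioc 2 (m+2) = Ico 3 (m+3) := by
          rw [← Finset.Icc_add_one_left_eq_Ioc, ← Finset.Ico_add_one_right_eq_Icc]
          rfl
        rw [hIoc, Finset.sum_Ico_eq_sum_range]
        rw [show m+3-3 = m from by omega]
        have hstep : ∀ i ∈ range m, (coeff (m+2)) (S ^ (3+i))
            = ∑ p ∈ Finset.HasAntidiagonal.antidiagonal (m+2), (s p.1 : ℚ) * (coeff p.2) (S ^ (2+i)) := by
          intro i _
          rw [show (3+i : ℕ) = (2+i)+1 from by omega, pow_succ', coeff_mul]
          refine Finset.sum_congr rfl fun p _ => ?_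
          rw [hco]
        rw [Finset.sum_congr rfl hstep, Finset.sum_comm]
        refine Finset.sum_congr rfl fun p hp => ?_
        rw [← Finset.mul_sum]
        rcases Nat.eq_zero_or_pos p.1 with hp1 | hp1
        · rw [hp1, hs0]
          push_cast
          ring
        · congr 1
          have hple : p.2 ≤ m + 1 := by
            have := Finset.HasAntidiagonal.mem_antidiagonal.mp hp
            omega
          rcases lt_or_ge p.2 2 with hj2 | hj2
          · have hz : ∀ i ∈ range m, (coeff p.2) (S ^ (2+i)) = 0 := by
              intro i _
              exact hvan (by omega)
            rw [Finset.sum_eq_zero hz]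
            interval_cases h : p.2
            · rw [hu0]
            · rw [hu1]
          · rw [huk p.2 hj2, hQ p.2 hj2]
            have hIcc : Icc 2 p.2 = Ico 2 (p.2+1) := by rw [Finset.Ico_add_one_right_eq_Icc]
            rw [hIcc, Finset.sum_Ico_eq_sum_range, show p.2+1-2 = p.2-1 from by omega]
            symm
            apply Finset.sum_subset
            · apply Finset.range_subset_range.mpr
              omega
            · intro x hx hnx
              simp only [mem_range] at hx hnx
              exact hvan (by omega)
      rw [hrest]
  have hQuadB : S*S + S*S + X = S + X*S := by linear_combination -hkey0
  -- recurrence via formal derivative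
  have hD := congrArg (d⁄dX ℚ) hQuadB
  simp only [map_add, Derivation.leibniz, derivative_X, smul_eq_mul, mul_one] at hD
  have hlin : (4*S - 1 - X) * (d⁄dX ℚ S) = S - 1 := by linear_combination hD
  have hdisc : (4*S - 1 - X)^2 = 1 - 6*X + X^2 := by linear_combination 8*hQuadB
  have H4 : (d⁄dX ℚ S) + X^2*(d⁄dX ℚ S) + S + S + S + X
      = X*(d⁄dX ℚ S) + X*(d⁄dX ℚ S) + X*(d⁄dX ℚ S) + X*(d⁄dX ℚ S) + X*(d⁄dX ℚ S)
        + X*(d⁄dX ℚ S) + X*S + 1 := by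
    linear_combination (-(d⁄dX ℚ S))*hdisc + (4*S-1-X)*hlin + 2*hQuadB
  have hRq : ∀ m : ℕ, ((m:ℚ)+3) * (s (m+3) : ℚ)
      = 3*(2*(m:ℚ)+3) * (s (m+2) : ℚ) - (m:ℚ) * (s (m+1) : ℚ) := by
    intro m
    have hc := congrArg (coeff (m+2)) H4
    simp only [map_add] at hc
    rw [coeff_X_pow_mul] at hc
    rw [show (m+2 : ℕ) = (m+1)+1 from rfl] at hc
    rw [coeff_succ_X_mul, coeff_succ_X_mul] at hc
    rw [coeff_X, if_neg (show ¬(m+1+1 = 1) from by omega), coeff_one,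
      if_neg (show ¬(m+1+1 = 0) from by omega)] at hc
    simp only [coeff_derivative, hco] at hc
    rw [show m+1+1+1 = m+3 from by omega, show m+1+1 = m+2 from by omega,
      show m+1+1 = m+2 from by omega] at hc
    push_cast at hc
    push_cast
    linarith
  -- initial values
  have hs2 : (s 2 : ℚ) = 1 := by
    have hc := congrArg (coeff 2) hQuadB
    simp only [map_add] at hc
    rw [coeff_mul, Finset.Nat.sum_antidiagonal_eq_sum_range_succ_mk] at hc
    simp only [Finset.sum_range_succ, Finset.sum_range_zero] at hc
    rw [show (2:ℕ) = 1+1 from rfl, coeff_succ_X_mul] at hc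
    rw [coeff_X, if_neg (by omega)] at hc
    simp only [hco] at hc
    rw [hs0, hs1] at hc
    push_cast at hc
    linarith
  have hs3 : (s 3 : ℚ) = 3 := by
    have hc := congrArg (coeff 3) hQuadB
    simp only [map_add] at hc
    rw [coeff_mul, Finset.Nat.sum_antidiagonal_eq_sum_range_succ_mk] at hc
    simp only [Finset.sum_range_succ, Finset.sum_range_zero] at hc
    rw [show (3:ℕ) = 2+1 from rfl, coeff_succ_X_mul] at hc
    rw [coeff_X, if_neg (by omega)] at hc
    simp only [hco] at hc
    rw [hs0, hs1] at hc
    push_cast at hc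
    linarith
  -- two-step induction
  have main : ∀ m : ℕ, 2*((m:ℚ)+2) * (s (m+2) : ℚ) = sA m
      ∧ 2*((m:ℚ)+3) * (s (m+3) : ℚ) = sA (m+1) := by
    intro m
    induction m with
    | zero =>
      constructor
      · rw [hs2]
        norm_num [sA, sT]
      · rw [hs3]
        norm_num [sA, sT, Finset.sum_range_succ]
    | succ n ih =>
      obtain ⟨ih1, ih2⟩ := ih
      have goal2 : 2*((n:ℚ)+4) * (s (n+4) : ℚ) = sA (n+2) := by
        have h := hRq (n+1)
        rw [show n+1+3 = n+4 from by omega, show n+1+2 = n+3 from by omega,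
          show n+1+1 = n+2 from by omega] at h
        push_cast at h
        have kA := keyA n
        have hfac : ((n:ℚ)+2)*((n:ℚ)+3) * (2*((n:ℚ)+4)*(s (n+4):ℚ) - sA (n+2)) = 0 := by
          linear_combination (2*((n:ℚ)+2)*((n:ℚ)+3))*h + (3*(2*(n:ℚ)+5)*((n:ℚ)+2))*ih2
            - (((n:ℚ)+1)*((n:ℚ)+3))*ih1 - kA
        have hne : ((n:ℚ)+2)*((n:ℚ)+3) ≠ 0 := by positivity
        have := (mul_eq_zero.mp hfac).resolve_left hne
        linarith
      constructor
      · rw [show n+1+2 = n+3 from by omega]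
        push_cast
        linarith [ih2]
      · rw [show n+1+3 = n+4 from by omega]
        push_cast
        linarith [goal2]
  -- conclusion
  intro k hk
  obtain ⟨m, rfl⟩ : ∃ m, k = m + 2 := ⟨k - 2, by omega⟩
  have hsum : ∑ j ∈ Icc 1 (m+2-1), ((m+2).choose j : ℚ) * ((m+2-2).choose (j-1) : ℚ) * 2^j
      = sA m := by
    rw [show m+2-1 = m+1 from by omega, show m+2-2 = m from by omega]
    rw [← Finset.Ico_add_one_right_eq_Icc, Finset.sum_Ico_eq_sum_range,
      show m+1+1-1 = m+1 from by omega]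
    rw [sA]
    refine Finset.sum_congr rfl fun i _ => ?_
    rw [sT, show 1+i-1 = i from by omega, show 1+i = i+1 from by omega]
  rw [hsum]
  have h1 := (main m).1
  have hne : (2*((m:ℚ)+2)) ≠ 0 := by positivity
  push_cast
  have h2 : ((s (m+2) : ℚ)) = sA m / (2*((m:ℚ)+2)) := by
    rw [eq_div_iff hne]
    linarith
  rw [h2]
  ring
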